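/- Let Y be a real vector space with a Hausdorff locally convex topology, and let U, V be convex subsets of Y with U open and U ∩ V ≠ ∅. Let y ∈ V ∩ cl(U), and suppose π is a (not necessarily continuous) linear functional on Y with π(y) ≤ π(y') for all y' ∈ U ∩ V. Then there exist linear functionals π₁ and π₂ on Y such that π₁ is continuous, π₁(y) ≤ π₁(u) for all u ∈ U, π₂(y) ≤ π₂(v) for all v ∈ V, and π = π₁ + π₂. -/

import Mathlib

/-- Decomposition of a supporting linear functional into a continuous
part supporting `U` and a part supporting `V`. -/
theorem stmt_2 {Y : Type*} [AddCommGroup Y] [Module ℝ Y]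
    [TopologicalSpace Y] [IsTopologicalAddGroup Y] [ContinuousSMul ℝ Y]
    [LocallyConvexSpace ℝ Y] [T2Space Y]
    (U V : Set Y) (hU : Convex ℝ U) (hV : Convex ℝ V) (hUopen : IsOpen U)
    (hUV : (U ∩ V).Nonempty) (y : Y) (hy : y ∈ V ∩ closure U)
    (π : Y →ₗ[ℝ] ℝ) (hπ : ∀ y' ∈ U ∩ V, π y ≤ π y') :
    ∃ (π₁ π₂ : Y →ₗ[ℝ] ℝ), Continuous π₁ ∧ (∀ u ∈ U, π₁ y ≤ π₁ u) ∧
      (∀ v ∈ V, π₂ y ≤ π₂ v) ∧ π = π₁ + π₂ := by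
  classical
  obtain ⟨w, hwU, hwV⟩ := hUV
  obtain ⟨hyV, hycl⟩ := hy
  set A : Set (Y × ℝ) := U ×ˢ Set.Iio (π y) with hA
  set B : Set (Y × ℝ) := (LinearMap.prod (LinearMap.id) π) '' V with hB
  have hAconv : Convex ℝ A := hU.prod (convex_Iio _)
  have hAopen : IsOpen A := hUopen.prod isOpen_Iio
  have hBconv : Convex ℝ B := hV.linear_image _
  have hdisj : Disjoint A B := by
    rw [Set.disjoint_left]
    rintro ⟨x, t⟩ ⟨hxU, ht⟩ ⟨v, hvV, hv⟩
    simp only [LinearMap.prod_apply, LinearMap.id_apply, Pi.prod, Prod.mk.injEq] at hv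
    obtain ⟨rfl, rfl⟩ := hv
    exact absurd (hπ v ⟨hxU, hvV⟩) (not_le.2 ht)
  obtain ⟨f, u, hfA, hfB⟩ := geometric_hahn_banach_open hAconv hAopen hBconv hdisj
  set c : ℝ := f (0, 1) with hc
  have hsplit : ∀ (x : Y) (t : ℝ), f (x, t) = f (x, 0) + c * t := by
    intro x t
    have h1 : (x, t) = (x, (0:ℝ)) + t • ((0:Y), (1:ℝ)) := by
      simp [Prod.ext_iff]
    rw [h1, map_add, map_smul, smul_eq_mul, hc]; ring
  have hAlt : ∀ x ∈ U, ∀ t < π y, f (x, 0) + c * t < u := by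
    intro x hx t ht
    have := hfA (x, t) ⟨hx, ht⟩
    rwa [hsplit] at this
  have hc0 : 0 ≤ c := by
    by_contra h
    push_neg at h
    set t := min (π y - 1) ((u - f (w, 0)) / c - 1) with htdef
    have ht : t < π y := lt_of_le_of_lt (min_le_left _ _) (by linarith)
    have h2 := hAlt w hwU t ht
    have h3 : t ≤ (u - f (w, 0)) / c - 1 := min_le_right _ _
    have h4 : c * ((u - f (w, 0)) / c - 1) ≤ c * t :=
      mul_le_mul_of_nonpos_left h3 h.le
    have h5 : c * ((u - f (w, 0)) / c - 1) = u - f (w, 0) - c := by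
      rw [mul_sub, mul_one, mul_div_cancel₀ _ (ne_of_lt h)]
    linarith
  have hUle : ∀ x ∈ U, f (x, 0) + c * π y ≤ u := by
    intro x hx
    by_contra h
    push_neg at h
    rcases hc0.eq_or_lt with hcz | hcz
    · have h2 := hAlt x hx (π y - 1) (by linarith)
      rw [← hcz] at h h2
      linarith
    · set ε := (f (x, 0) + c * π y - u) / (2 * c) with hε
      have hεpos : 0 < ε := div_pos (by linarith) (by linarith)
      have h2 := hAlt x hx (π y - ε) (by linarith)
      have h3 : c * ε = (f (x, 0) + c * π y - u) / 2 := by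
        rw [hε]; field_simp
      nlinarith [h2]
  have hgcont : Continuous fun x : Y => f (x, 0) + c * π y :=
    (f.continuous.comp (continuous_id.prodMk continuous_const)).add continuous_const
  have hclosed : IsClosed {x : Y | f (x, 0) + c * π y ≤ u} :=
    isClosed_le hgcont continuous_const
  have hyle : f (y, 0) + c * π y ≤ u :=
    closure_minimal (fun x hx => hUle x hx) hclosed hycl
  have hyge : u ≤ f (y, 0) + c * π y := by
    have := hfB _ ⟨y, hyV, rfl⟩
    rwa [show (LinearMap.id.prod π) y = (y, π y) from rfl, hsplit] at this
  have hu : u = f (y, 0) + c * π y := le_antisymm hyge hyle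
  have hcpos : 0 < c := by
    rcases hc0.eq_or_lt with hcz | hcz
    · exfalso
      have h2 := hAlt w hwU (π y - 1) (by linarith)
      have h3 := hfB _ ⟨w, hwV, rfl⟩
      rw [show (LinearMap.id.prod π) w = (w, π w) from rfl, hsplit] at h3
      rw [← hcz] at h2 h3
      linarith
    · exact hcz
  set π₁L : Y →L[ℝ] ℝ := (-c⁻¹) • (f.comp (ContinuousLinearMap.inl ℝ Y ℝ)) with hπ₁L
  have hπ₁app : ∀ x : Y, π₁L x = -c⁻¹ * f (x, 0) := by
    intro x
    simp [hπ₁L, ContinuousLinearMap.smul_apply, ContinuousLinearMap.comp_apply,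
      ContinuousLinearMap.inl_apply, smul_eq_mul]
  refine ⟨π₁L.toLinearMap, π - π₁L.toLinearMap, π₁L.continuous, ?_, ?_, by abel⟩
  · intro x hx
    have h1 : f (x, 0) + c * π y ≤ u := hUle x hx
    rw [hu] at h1
    have h2 : f (x, 0) ≤ f (y, 0) := by linarith
    have h3 := mul_le_mul_of_nonpos_left h2 (neg_nonpos.2 (inv_nonneg.2 hc0))
    simpa [hπ₁app] using h3
  · intro v hv
    have h1 := hfB _ ⟨v, hv, rfl⟩
    rw [show (LinearMap.id.prod π) v = (v, π v) from rfl, hsplit, hu] at h1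
    have h2 := mul_le_mul_of_nonneg_left h1 (inv_nonneg.2 hc0)
    rw [mul_add, mul_add, ← mul_assoc, inv_mul_cancel₀ hcpos.ne', one_mul,
      ← mul_assoc, inv_mul_cancel₀ hcpos.ne', one_mul] at h2
    simp only [LinearMap.sub_apply, ContinuousLinearMap.coe_coe, hπ₁app]
    linarith
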